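/- Let Ω and t be natural numbers with 1 ≤ t + 1 ≤ Ω, let g := gcd(Ω, t + 1), β̂ := (t + 1)/g, B̂ := Ω/g, and Ŝ := C(Ω, t + 1)/B̂. Let K be a finite set with Ω elements. Then the family of all (t+1)-element subsets of K can be partitioned into Ŝ pairwise disjoint subfamilies 𝔖̂(1), …, 𝔖̂(Ŝ) such that every k ∈ K belongs to exactly β̂ members of each subfamily 𝔖̂(î); consequently each subfamily has exactly B̂ members. -/

import Mathlib

lemma hallFrac {L R : Type*} [Fintype L] [Fintype R] [DecidableEq R]
    (t : L → Finset R) (w : L → R → ℚ)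
    (h0 : ∀ l r, 0 ≤ w l r)
    (hsupp : ∀ l r, w l r ≠ 0 → r ∈ t l)
    (hrow : ∀ l, ∑ r, w l r = 1)
    (hcol : ∀ r, ∑ l, w l r = 1) :
    ∃ f : L → R, Function.Bijective f ∧ ∀ l, f l ∈ t l := by
  have hall : ∀ S : Finset L, S.card ≤ (S.biUnion t).card := by
    intro S
    have h1 : (S.card : ℚ) = ∑ l ∈ S, ∑ r ∈ S.biUnion t, w l r := by
      have hx : ∀ l ∈ S, ∑ r ∈ S.biUnion t, w l r = (1:ℚ) := by
        intro l hl
        have h3 : ∑ r ∈ S.biUnion t, w l r = ∑ r, w l r := by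
          refine Finset.sum_subset (Finset.subset_univ _) fun r _ hr => ?_
          by_contra h
          exact hr (Finset.mem_biUnion.2 ⟨l, hl, hsupp l r h⟩)
        rw [h3, hrow]
      rw [Finset.sum_congr rfl hx, Finset.sum_const, nsmul_eq_mul, mul_one]
    have h2 : ∑ l ∈ S, ∑ r ∈ S.biUnion t, w l r ≤ ((S.biUnion t).card : ℚ) := by
      rw [Finset.sum_comm, Finset.card_eq_sum_ones (S.biUnion t)]
      push_cast
      refine Finset.sum_le_sum fun r _ => ?_
      calc ∑ l ∈ S, w l r ≤ ∑ l, w l r :=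
            Finset.sum_le_sum_of_subset_of_nonneg (Finset.subset_univ _)
              (fun l _ _ => h0 l r)
        _ = 1 := hcol r
    exact_mod_cast h1 ▸ h2
  obtain ⟨f, hinj, hmem⟩ :=
    (Finset.all_card_le_biUnion_card_iff_exists_injective t).1 hall
  have hcard : Fintype.card L = Fintype.card R := by
    have : (Fintype.card L : ℚ) = Fintype.card R := by
      rw [← Finset.card_univ, ← Finset.card_univ, Finset.card_eq_sum_ones,
        Finset.card_eq_sum_ones]
      push_cast
      calc (∑ _l : L, (1:ℚ)) = ∑ l, ∑ r, w l r := by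
            exact Finset.sum_congr rfl fun l _ => (hrow l).symm
        _ = ∑ r, ∑ l, w l r := Finset.sum_comm
        _ = ∑ _r : R, 1 := Finset.sum_congr rfl fun r _ => hcol r
    exact_mod_cast this
  exact ⟨f, (Fintype.bijective_iff_injective_and_card f).2 ⟨hinj, hcard⟩, hmem⟩


section gadget
variable {I J : Type*} [Fintype I] [Fintype J] [DecidableEq I] [DecidableEq J]
variable (cap : I → J → ℕ) (r : I → ℕ) (c : J → ℕ) (q : I → J → ℚ)

abbrev BCell : Type _ := Σ i : I, Σ j : J, Fin (cap i j)
abbrev BL : Type _ := (Σ i : I, Fin (r i)) ⊕ BCell cap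
abbrev BR : Type _ := BCell cap ⊕ (Σ j : J, Fin (c j))

def Bt : BL cap r → Finset (BR cap c)
  | Sum.inl p => (Finset.univ : Finset (Σ j : J, Fin (cap p.1 j))).image
      (fun z => Sum.inl ⟨p.1, z⟩)
  | Sum.inr cell => insert (Sum.inl cell)
      ((Finset.univ : Finset (Fin (c cell.2.1))).image (fun s => Sum.inr ⟨cell.2.1, s⟩))

def Bw : BL cap r → BR cap c → ℚ
  | Sum.inl p, Sum.inl cell =>
      if cell.1 = p.1 then q cell.1 cell.2.1 / (cap cell.1 cell.2.1 * r p.1) else 0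
  | Sum.inl _, Sum.inr _ => 0
  | Sum.inr cell, Sum.inl cell' =>
      if cell' = cell then 1 - q cell.1 cell.2.1 / cap cell.1 cell.2.1 else 0
  | Sum.inr cell, Sum.inr p =>
      if p.1 = cell.2.1 then q cell.1 cell.2.1 / (cap cell.1 cell.2.1 * c p.1) else 0

variable {cap r c q}

lemma sigma_sum {β : I → Type*} [∀ i, Fintype (β i)] (f : (Σ i, β i) → ℚ) :
    ∑ x : Σ i, β i, f x = ∑ i, ∑ b : β i, f ⟨i, b⟩ := by
  rw [← Finset.univ_sigma_univ, Finset.sum_sigma]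

lemma hq_zero (hq0 : ∀ i j, 0 ≤ q i j) (hqc : ∀ i j, q i j ≤ cap i j) :
    ∀ i j, cap i j = 0 → q i j = 0 := fun i j h =>
  le_antisymm (by simpa [h] using hqc i j) (hq0 i j)

lemma key_cancel (hq0 : ∀ i j, 0 ≤ q i j) (hqc : ∀ i j, q i j ≤ cap i j)
    (i : I) (j : J) (d : ℚ) :
    (cap i j : ℚ) * (q i j / (cap i j * d)) = q i j / d := by
  rcases eq_or_ne (cap i j) 0 with h | h
  · simp [h, hq_zero hq0 hqc i j h]
  · have h' : (cap i j : ℚ) ≠ 0 := Nat.cast_ne_zero.2 h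
    rw [← mul_div_assoc, mul_div_mul_left _ _ h']

lemma Bw_nonneg (hq0 : ∀ i j, 0 ≤ q i j) (hqc : ∀ i j, q i j ≤ cap i j)
    (l : BL cap r) (z : BR cap c) : 0 ≤ Bw cap r c q l z := by
  cases l with
  | inl p =>
    cases z with
    | inl cell =>
      simp only [Bw]
      split
      · exact div_nonneg (hq0 _ _) (by positivity)
      · exact le_refl 0
    | inr p => simp [Bw]
  | inr cell =>
    cases z with
    | inl cell' =>
      simp only [Bw]
      split
      · rcases eq_or_ne (cap cell.1 cell.2.1) 0 with h | h
        · simp [h, hq_zero hq0 hqc _ _ h]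
        · have h' : (0:ℚ) < cap cell.1 cell.2.1 := by positivity
          have := div_le_one_of_le₀ (hqc cell.1 cell.2.1) h'.le
          linarith
      · exact le_refl 0
    | inr p =>
      simp only [Bw]
      split
      · exact div_nonneg (hq0 _ _) (by positivity)
      · exact le_refl 0

lemma Bw_supp (l : BL cap r) (z : BR cap c) (h : Bw cap r c q l z ≠ 0) :
    z ∈ Bt cap r c l := by
  cases l with
  | inl p =>
    cases z with
    | inl cell =>
      simp only [Bw] at h
      rcases cell with ⟨i, j, u⟩
      by_cases hi : i = p.1
      · subst hi
        simp only [Bt, Finset.mem_image]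
        exact ⟨⟨j, u⟩, Finset.mem_univ _, rfl⟩
      · simp [hi] at h
    | inr p' => simp [Bw] at h
  | inr cell =>
    cases z with
    | inl cell' =>
      simp only [Bw] at h
      by_cases hc' : cell' = cell
      · subst hc'
        simp [Bt]
      · simp [hc'] at h
    | inr p =>
      simp only [Bw] at h
      rcases p with ⟨j, s⟩
      by_cases hj : j = cell.2.1
      · subst hj
        simp only [Bt, Finset.mem_insert, Finset.mem_image]
        exact Or.inr ⟨s, Finset.mem_univ _, rfl⟩
      · simp [hj] at h

lemma Bw_row (hq0 : ∀ i j, 0 ≤ q i j) (hqc : ∀ i j, q i j ≤ cap i j)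
    (hr : ∀ i, ∑ j, q i j = r i) (hc : ∀ j, ∑ i, q i j = c j) (l : BL cap r) :
    ∑ z : BR cap c, Bw cap r c q l z = 1 := by
  rw [Fintype.sum_sum_type]
  cases l with
  | inl p =>
    have hr0 : (0:ℚ) < r p.1 := by exact_mod_cast p.2.pos
    have h2 : ∑ p' : Σ j, Fin (c j), Bw cap r c q (Sum.inl p) (Sum.inr p') = 0 := by
      simp [Bw]
    rw [h2, add_zero, sigma_sum]
    have h1 : ∀ i', (∑ z : Σ j, Fin (cap i' j),
        Bw cap r c q (Sum.inl p) (Sum.inl ⟨i', z⟩))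
        = if i' = p.1 then ∑ j, (cap i' j : ℚ) * (q i' j / (cap i' j * r p.1)) else 0 := by
      intro i'
      rw [sigma_sum]
      by_cases hi : i' = p.1
      · simp only [hi, if_pos rfl]
        refine Finset.sum_congr rfl fun j _ => ?_
        simp [Bw, hi, Finset.sum_const, mul_comm]
      · simp [Bw, hi]
    rw [Finset.sum_congr rfl fun i' _ => h1 i', Finset.sum_ite_eq' Finset.univ p.1]
    simp only [Finset.mem_univ, if_pos]
    have h3 : ∀ j, (cap p.1 j : ℚ) * (q p.1 j / (cap p.1 j * r p.1)) = q p.1 j / r p.1 :=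
      fun j => key_cancel hq0 hqc p.1 j _
    rw [Finset.sum_congr rfl fun j _ => h3 j, ← Finset.sum_div, hr, div_self hr0.ne']
  | inr cell =>
    obtain ⟨i, j, u⟩ := cell
    have h1 : ∑ cell' : BCell cap, Bw cap r c q (Sum.inr ⟨i,j,u⟩) (Sum.inl cell')
        = 1 - q i j / cap i j := by
      have : ∀ cell' : BCell cap, Bw cap r c q (Sum.inr ⟨i,j,u⟩) (Sum.inl cell')
          = if cell' = ⟨i,j,u⟩ then 1 - q i j / cap i j else 0 := fun _ => rfl
      rw [Finset.sum_congr rfl fun z _ => this z, Finset.sum_ite_eq' Finset.univ]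
      simp
    have h2 : ∑ p' : Σ j', Fin (c j'), Bw cap r c q (Sum.inr ⟨i,j,u⟩) (Sum.inr p')
        = (c j : ℚ) * (q i j / (cap i j * c j)) := by
      rw [sigma_sum]
      rw [Finset.sum_eq_single j]
      · simp [Bw, Finset.sum_const, mul_comm]
      · intro b _ hb
        simp [Bw, hb]
      · intro h
        exact absurd (Finset.mem_univ j) h
    rw [h1, h2]
    rcases eq_or_ne (c j) 0 with hcj | hcj
    · have : q i j = 0 := by
        have := hc j
        rw [hcj] at this
        have h4 := (Finset.sum_eq_zero_iff_of_nonneg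
          (fun i' _ => hq0 i' j)).1 (by simpa using this)
        exact h4 i (Finset.mem_univ i)
      simp [this]
    · have hcap : (cap i j : ℚ) ≠ 0 := Nat.cast_ne_zero.2 u.pos.ne'
      have hc' : (c j : ℚ) ≠ 0 := Nat.cast_ne_zero.2 hcj
      field_simp
      ring

lemma Bw_col (hq0 : ∀ i j, 0 ≤ q i j) (hqc : ∀ i j, q i j ≤ cap i j)
    (hr : ∀ i, ∑ j, q i j = r i) (hc : ∀ j, ∑ i, q i j = c j) (z : BR cap c) :
    ∑ l : BL cap r, Bw cap r c q l z = 1 := by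
  rw [Fintype.sum_sum_type]
  cases z with
  | inl cell =>
    obtain ⟨i, j, u⟩ := cell
    have h1 : ∑ p : Σ i', Fin (r i'), Bw cap r c q (Sum.inl p) (Sum.inl ⟨i,j,u⟩)
        = (r i : ℚ) * (q i j / (cap i j * r i)) := by
      rw [sigma_sum]
      rw [Finset.sum_eq_single i]
      · simp [Bw, Finset.sum_const, mul_comm]
      · intro b _ hb
        simp [Bw, Ne.symm hb]
      · intro h
        exact absurd (Finset.mem_univ i) h
    have h2 : ∑ cell' : BCell cap, Bw cap r c q (Sum.inr cell') (Sum.inl ⟨i,j,u⟩)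
        = 1 - q i j / cap i j := by
      have key : ∀ cell' : BCell cap, Bw cap r c q (Sum.inr cell') (Sum.inl ⟨i,j,u⟩)
          = if (⟨i,j,u⟩ : BCell cap) = cell'
            then 1 - q cell'.1 cell'.2.1 / cap cell'.1 cell'.2.1 else 0 := fun _ => rfl
      rw [Finset.sum_congr rfl fun z _ => key z, Finset.sum_ite_eq Finset.univ]
      simp
    rw [h1, h2]
    rcases eq_or_ne (r i) 0 with hri | hri
    · have : q i j = 0 := by
        have := hr i
        rw [hri] at this
        have h4 := (Finset.sum_eq_zero_iff_of_nonneg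
          (fun j' _ => hq0 i j')).1 (by simpa using this)
        exact h4 j (Finset.mem_univ j)
      simp [this]
    · have hcap : (cap i j : ℚ) ≠ 0 := Nat.cast_ne_zero.2 u.pos.ne'
      have hr' : (r i : ℚ) ≠ 0 := Nat.cast_ne_zero.2 hri
      field_simp
      ring
  | inr p =>
    obtain ⟨j, s⟩ := p
    have hcj : (0:ℚ) < c j := by exact_mod_cast s.pos
    have h1 : ∑ p' : Σ i, Fin (r i), Bw cap r c q (Sum.inl p') (Sum.inr ⟨j,s⟩) = 0 := by
      simp [Bw]
    rw [h1, zero_add, sigma_sum]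
    have h2 : ∀ i', (∑ z : Σ j', Fin (cap i' j'),
        Bw cap r c q (Sum.inr ⟨i', z⟩) (Sum.inr ⟨j,s⟩)) = q i' j / c j := by
      intro i'
      rw [sigma_sum]
      rw [Finset.sum_eq_single j]
      · have : ∀ u' : Fin (cap i' j), Bw cap r c q (Sum.inr ⟨i', j, u'⟩) (Sum.inr ⟨j,s⟩)
            = q i' j / (cap i' j * c j) := by
          intro u'
          simp [Bw]
        rw [Finset.sum_congr rfl fun u' _ => this u', Finset.sum_const]
        simp only [Finset.card_univ, Fintype.card_fin, nsmul_eq_mul]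
        exact key_cancel hq0 hqc i' j _
      · intro b _ hb
        simp [Bw, Ne.symm hb]
      · intro h
        exact absurd (Finset.mem_univ j) h
    rw [Finset.sum_congr rfl fun i' _ => h2 i', ← Finset.sum_div, hc, div_self hcj.ne']

end gadget

lemma trans_integral {I J : Type*} [Fintype I] [Fintype J] [DecidableEq I] [DecidableEq J]
    (cap : I → J → ℕ) (r : I → ℕ) (c : J → ℕ) (q : I → J → ℚ)
    (hq0 : ∀ i j, 0 ≤ q i j) (hqc : ∀ i j, q i j ≤ cap i j)
    (hr : ∀ i, ∑ j, q i j = r i) (hc : ∀ j, ∑ i, q i j = c j) :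
    ∃ x : I → J → ℕ, (∀ i j, x i j ≤ cap i j) ∧ (∀ i, ∑ j, x i j = r i) ∧
      (∀ j, ∑ i, x i j = c j) := by
  obtain ⟨f, hbij, hmem⟩ := hallFrac (Bt cap r c) (Bw cap r c q)
    (Bw_nonneg hq0 hqc) (fun l z => Bw_supp l z) (Bw_row hq0 hqc hr hc)
    (Bw_col hq0 hqc hr hc)
  have factA : ∀ (i : I) (s : Fin (r i)), ∃ cz : Σ j, Fin (cap i j),
      f (Sum.inl ⟨i, s⟩) = Sum.inl ⟨i, cz⟩ := by
    intro i s
    have h := hmem (Sum.inl ⟨i, s⟩)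
    simp only [Bt, Finset.mem_image] at h
    obtain ⟨z, _, hz⟩ := h
    exact ⟨z, hz.symm⟩
  have factB : ∀ cell : BCell cap, f (Sum.inr cell) = Sum.inl cell ∨
      ∃ s : Fin (c cell.2.1), f (Sum.inr cell) = Sum.inr ⟨cell.2.1, s⟩ := by
    intro cell
    have h := hmem (Sum.inr cell)
    simp only [Bt, Finset.mem_insert, Finset.mem_image] at h
    rcases h with h | ⟨s, _, hs⟩
    · exact Or.inl h
    · exact Or.inr ⟨s, hs.symm⟩
  use fun i j => (Finset.univ.filter
    fun u : Fin (cap i j) => (f (Sum.inr ⟨i, j, u⟩)).isRight).card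
  refine ⟨fun i j => le_trans (Finset.card_filter_le _ _) (by simp), ?_, ?_⟩
  · -- row sums
    intro i
    have hsig : (Finset.univ : Finset (Σ j, Fin (cap i j))).filter
        (fun p => (f (Sum.inr ⟨i, p.1, p.2⟩)).isRight)
        = Finset.univ.sigma (fun j => Finset.univ.filter
            (fun u : Fin (cap i j) => (f (Sum.inr ⟨i, j, u⟩)).isRight)) := by
      ext ⟨j, u⟩
      simp [Finset.mem_sigma]
    have hcards : ∑ j, (Finset.univ.filter
        (fun u : Fin (cap i j) => (f (Sum.inr ⟨i, j, u⟩)).isRight)).card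
        = ((Finset.univ : Finset (Σ j, Fin (cap i j))).filter
            (fun p => (f (Sum.inr ⟨i, p.1, p.2⟩)).isRight)).card := by
      rw [hsig, Finset.card_sigma]
    rw [hcards]
    have hsel_exists : ∀ (p : Σ j, Fin (cap i j)),
        (f (Sum.inr ⟨i, p.1, p.2⟩)).isRight →
        ∃ s : Fin (r i), f (Sum.inl ⟨i, s⟩) = Sum.inl ⟨i, p⟩ := by
      intro p hp
      obtain ⟨l, hl⟩ := hbij.2 (Sum.inl ⟨i, p⟩)
      cases l with
      | inl pp =>
        obtain ⟨cz, hcz⟩ := factA pp.1 pp.2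
        have h2 : (Sum.inl ⟨i, p⟩ : BR cap c) = Sum.inl ⟨pp.1, cz⟩ := by
          rw [← hl, hcz]
        have h3 : (⟨i, p⟩ : BCell cap) = ⟨pp.1, cz⟩ := Sum.inl.inj h2
        have h4 : i = pp.1 := congrArg Sigma.fst h3
        subst h4
        exact ⟨pp.2, hl⟩
      | inr cell' =>
        rcases factB cell' with h | ⟨s', hs'⟩
        · rw [hl] at h
          have h3 : cell' = ⟨i, p⟩ := Sum.inl.inj h.symm
          subst h3
          rw [hl] at hp
          simp at hp
        · rw [hl] at hs'
          exact absurd hs' (by simp)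
    have := Finset.card_bij
      (fun (p : Σ j, Fin (cap i j)) (hp : p ∈ (Finset.univ : Finset (Σ j, Fin (cap i j))).filter
          (fun p => (f (Sum.inr ⟨i, p.1, p.2⟩)).isRight)) =>
        (hsel_exists p (Finset.mem_filter.1 hp).2).choose)
      (fun p hp => Finset.mem_univ _)
      (by
        intro p1 h1 p2 h2 heq
        have s1 := (hsel_exists p1 (Finset.mem_filter.1 h1).2).choose_spec
        have s2 := (hsel_exists p2 (Finset.mem_filter.1 h2).2).choose_spec
        rw [heq] at s1
        have h3 : (Sum.inl ⟨i, p1⟩ : BR cap c) = Sum.inl ⟨i, p2⟩ := by rw [← s1, s2]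
        have h4 : (⟨i, p1⟩ : BCell cap) = ⟨i, p2⟩ := Sum.inl.inj h3
        have h5 := Sigma.mk.inj_iff.1 h4
        exact eq_of_heq h5.2)
      (by
        intro s _
        obtain ⟨cz, hcz⟩ := factA i s
        have hsel : (f (Sum.inr ⟨i, cz.1, cz.2⟩)).isRight := by
          rcases factB ⟨i, cz⟩ with h | ⟨s', hs'⟩
          · exfalso
            rw [← hcz] at h
            have := hbij.1 h
            simp at this
          · rw [hs']
            simp
        have hmemf : (⟨cz.1, cz.2⟩ : Σ j, Fin (cap i j)) ∈
            (Finset.univ : Finset (Σ j, Fin (cap i j))).filter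
              (fun p => (f (Sum.inr ⟨i, p.1, p.2⟩)).isRight) :=
          Finset.mem_filter.2 ⟨Finset.mem_univ _, hsel⟩
        refine ⟨cz, hmemf, ?_⟩
        have spec := (hsel_exists cz (Finset.mem_filter.1 hmemf).2).choose_spec
        have h3 : f (Sum.inl ⟨i, (hsel_exists cz (Finset.mem_filter.1 hmemf).2).choose⟩)
            = f (Sum.inl ⟨i, s⟩) := by rw [spec, hcz]
        have h4 := hbij.1 h3
        have h5 : (⟨i, (hsel_exists cz (Finset.mem_filter.1 hmemf).2).choose⟩
            : Σ i', Fin (r i')) = ⟨i, s⟩ := Sum.inl.inj h4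
        exact eq_of_heq (Sigma.mk.inj_iff.1 h5).2)
    rw [this]
    simp
  · -- column sums
    intro j
    have hsig : (Finset.univ : Finset (Σ i, Fin (cap i j))).filter
        (fun p => (f (Sum.inr ⟨p.1, j, p.2⟩)).isRight)
        = Finset.univ.sigma (fun i => Finset.univ.filter
            (fun u : Fin (cap i j) => (f (Sum.inr ⟨i, j, u⟩)).isRight)) := by
      ext ⟨i, u⟩
      simp [Finset.mem_sigma]
    have hcards : ∑ i, (Finset.univ.filter
        (fun u : Fin (cap i j) => (f (Sum.inr ⟨i, j, u⟩)).isRight)).card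
        = ((Finset.univ : Finset (Σ i, Fin (cap i j))).filter
            (fun p => (f (Sum.inr ⟨p.1, j, p.2⟩)).isRight)).card := by
      rw [hsig, Finset.card_sigma]
    rw [hcards]
    have hsel_exists : ∀ (p : Σ i, Fin (cap i j)),
        (f (Sum.inr ⟨p.1, j, p.2⟩)).isRight →
        ∃ s : Fin (c j), f (Sum.inr ⟨p.1, j, p.2⟩) = Sum.inr ⟨j, s⟩ := by
      intro p hp
      rcases factB ⟨p.1, j, p.2⟩ with h | ⟨s', hs'⟩
      · rw [h] at hp
        simp at hp
      · exact ⟨s', hs'⟩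
    have := Finset.card_bij
      (fun (p : Σ i, Fin (cap i j)) (hp : p ∈ (Finset.univ : Finset (Σ i, Fin (cap i j))).filter
          (fun p => (f (Sum.inr ⟨p.1, j, p.2⟩)).isRight)) =>
        (hsel_exists p (Finset.mem_filter.1 hp).2).choose)
      (fun p hp => Finset.mem_univ _)
      (by
        intro p1 h1 p2 h2 heq
        have s1 := (hsel_exists p1 (Finset.mem_filter.1 h1).2).choose_spec
        have s2 := (hsel_exists p2 (Finset.mem_filter.1 h2).2).choose_spec
        have h3 : f (Sum.inr ⟨p1.1, j, p1.2⟩) = f (Sum.inr ⟨p2.1, j, p2.2⟩) := by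
          rw [s1, s2, heq]
        have h4 := hbij.1 h3
        have h5 : (⟨p1.1, j, p1.2⟩ : BCell cap) = ⟨p2.1, j, p2.2⟩ := Sum.inr.inj h4
        have h6 := Sigma.mk.inj_iff.1 h5
        obtain ⟨hfst, hsnd⟩ := h6
        rcases p1 with ⟨i1, u1⟩
        rcases p2 with ⟨i2, u2⟩
        simp only at hfst
        subst hfst
        have h7 := eq_of_heq hsnd
        have h8 := (Sigma.mk.inj_iff.1 h7).2
        have h9 := eq_of_heq h8
        exact congrArg (Sigma.mk i1) h9)
      (by
        intro s _
        obtain ⟨l, hl⟩ := hbij.2 (Sum.inr ⟨j, s⟩)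
        cases l with
        | inl pp =>
          obtain ⟨cz, hcz⟩ := factA pp.1 pp.2
          rw [hl] at hcz
          exact absurd hcz (by simp)
        | inr cell' =>
          rcases factB cell' with h | ⟨s', hs'⟩
          · rw [hl] at h
            exact absurd h (by simp)
          · rw [hl] at hs'
            have h3 : (⟨cell'.2.1, s'⟩ : Σ j', Fin (c j')) = ⟨j, s⟩ := Sum.inr.inj hs'.symm
            have hj : cell'.2.1 = j := congrArg Sigma.fst h3
            rcases cell' with ⟨i', j', u'⟩
            simp only at hj
            subst hj
            have hs2 : s' = s := by
              have := (Sigma.mk.inj_iff.1 h3).2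
              exact eq_of_heq this
            subst hs2
            have hsel : (f (Sum.inr ⟨i', j', u'⟩)).isRight := by rw [hl]; simp
            have hmemf : (⟨i', u'⟩ : Σ i, Fin (cap i j')) ∈
                (Finset.univ : Finset (Σ i, Fin (cap i j'))).filter
                  (fun p => (f (Sum.inr ⟨p.1, j', p.2⟩)).isRight) :=
              Finset.mem_filter.2 ⟨Finset.mem_univ _, hsel⟩
            refine ⟨⟨i', u'⟩, hmemf, ?_⟩
            have spec := (hsel_exists ⟨i', u'⟩ (Finset.mem_filter.1 hmemf).2).choose_spec
            have h4 : (⟨j', (hsel_exists ⟨i', u'⟩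
                (Finset.mem_filter.1 hmemf).2).choose⟩ : Σ j'', Fin (c j''))
                = ⟨j', s'⟩ := Sum.inr.inj (spec.symm.trans hl)
            exact eq_of_heq (Sigma.mk.inj_iff.1 h4).2)
    rw [this]
    simp

lemma stage (n k g β B S : ℕ) (hkg : k = g * β) (hng : n = g * B)
    (hk1 : 1 ≤ k) (hkn : k ≤ n) (hSB : S * B = n.choose k) :
    ∀ m, m ≤ n → ∃ a : Fin S → Finset ℕ → ℕ,
      (∀ A ∈ (Finset.range m).powerset,
        ∑ i, a i A = if A.card ≤ k then (n - m).choose (k - A.card) else 0) ∧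
      (∀ i : Fin S, ∀ v < m,
        ∑ A ∈ (Finset.range m).powerset.filter (fun A => v ∈ A), a i A = β) ∧
      (∀ i : Fin S, ∑ A ∈ (Finset.range m).powerset, a i A = B) := by
  intro m
  induction m with
  | zero =>
    intro _
    refine ⟨fun _ A => if A = ∅ then B else 0, ?_, ?_, ?_⟩
    · intro A hA
      simp only [Finset.range_zero, Finset.powerset_empty, Finset.mem_singleton] at hA
      subst hA
      simp only [Finset.card_empty, Nat.sub_zero, Nat.zero_le, if_pos, if_pos rfl]
      rw [Finset.sum_const, Finset.card_univ, Fintype.card_fin, smul_eq_mul, hSB]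
    · intro i v hv
      omega
    · intro i
      simp [Finset.range_zero, Finset.powerset_empty]
  | succ m ih =>
    intro hm1
    have hmn : m < n := hm1
    obtain ⟨a, hC1, hC2, hC3⟩ := ih (le_of_lt hmn)
    set Jset := (Finset.range m).powerset with hJset
    -- vanishing of a outside feasible partial edges
    have hbound : ∀ (i : Fin S) (A : Finset ℕ), A ∈ Jset → a i A ≠ 0 →
        A.card ≤ k ∧ k - A.card ≤ n - m := by
      intro i A hA hne
      have hsum := hC1 A hA
      by_contra hcon
      push_neg at hcon
      have hzero : ∑ i', a i' A = 0 := by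
        rw [hsum]
        by_cases h1 : A.card ≤ k
        · have h2 := hcon h1
          rw [if_pos h1]
          exact Nat.choose_eq_zero_of_lt (by omega)
        · rw [if_neg h1]
      have : a i A = 0 := by
        have hle : a i A ≤ ∑ i', a i' A := by
          exact Finset.single_le_sum (f := fun i' => a i' A)
            (fun i' _ => Nat.zero_le _) (Finset.mem_univ i)
        omega
      exact hne this
    -- the incidence sum
    have hinc : ∀ i : Fin S, ∑ A ∈ Jset, a i A * A.card = m * β := by
      intro i
      have hcard : ∀ A ∈ Jset, a i A * A.card
          = ∑ v ∈ Finset.range m, if v ∈ A then a i A else 0 := by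
        intro A hA
        have hsub : A ⊆ Finset.range m := Finset.mem_powerset.1 hA
        rw [Finset.sum_ite_mem]
        rw [Finset.inter_eq_right.2 hsub]
        rw [Finset.sum_const, smul_eq_mul, mul_comm]
      rw [Finset.sum_congr rfl hcard, Finset.sum_comm]
      have : ∀ v ∈ Finset.range m,
          ∑ A ∈ Jset, (if v ∈ A then a i A else 0) = β := by
        intro v hv
        rw [← Finset.sum_filter]
        exact hC2 i v (Finset.mem_range.1 hv)
      rw [Finset.sum_congr rfl this, Finset.sum_const, Finset.card_range, smul_eq_mul]
    have hS1 : ∀ i : Fin S, ∑ A ∈ Jset, a i A * (k - A.card) = β * (n - m) := by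
      intro i
      have h2 : ∑ A ∈ Jset, (a i A * (k - A.card) + a i A * A.card)
          = ∑ A ∈ Jset, a i A * k := by
        refine Finset.sum_congr rfl fun A hA => ?_
        rcases eq_or_ne (a i A) 0 with h | h
        · simp [h]
        · have hb := (hbound i A hA h).1
          rw [← Nat.mul_add, Nat.sub_add_cancel hb]
      rw [Finset.sum_add_distrib, hinc i, ← Finset.sum_mul, hC3 i] at h2
      have hβn : β * n = k * B := by rw [hkg, hng]; ring
      have h2' : β * (n - m) + β * m = β * n := by
        rw [← Nat.mul_add, Nat.sub_add_cancel hmn.le]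
      have hcomm : m * β = β * m := Nat.mul_comm m β
      have hcomm2 : B * k = k * B := Nat.mul_comm B k
      omega
    -- set up the transportation problem
    have hnm0 : (0:ℚ) < ((n - m : ℕ) : ℚ) := by
      have h0 : 0 < n - m := by omega
      exact_mod_cast h0
    set q : Fin S → {A : Finset ℕ // A ∈ Jset} → ℚ :=
      fun i A => (a i A.1 : ℚ) * ((k - A.1.card : ℕ) : ℚ) / ((n - m : ℕ) : ℚ) with hqdef
    have hq0 : ∀ i A, 0 ≤ q i A := by
      intro i A
      apply div_nonneg _ hnm0.le
      positivity
    have hqc : ∀ i A, q i A ≤ (a i A.1 : ℚ) := by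
      intro i A
      rcases eq_or_ne (a i A.1) 0 with h | h
      · simp [hqdef, h]
      · have hb := hbound i A.1 A.2 h
        rw [hqdef]
        rw [div_le_iff₀ hnm0]
        calc (a i A.1 : ℚ) * ((k - A.1.card : ℕ) : ℚ)
            ≤ (a i A.1 : ℚ) * ((n - m : ℕ) : ℚ) := by
              apply mul_le_mul_of_nonneg_left _ (by positivity)
              exact_mod_cast hb.2
          _ = _ := rfl
    have hr : ∀ i, ∑ A : {A : Finset ℕ // A ∈ Jset}, q i A = ((β : ℕ) : ℚ) := by
      intro i
      have hterm : ∀ A : {A : Finset ℕ // A ∈ Jset},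
          q i A = ((a i A.1 * (k - A.1.card) : ℕ) : ℚ) / ((n - m : ℕ) : ℚ) := by
        intro A
        rw [hqdef]
        push_cast
        ring
      rw [Finset.sum_congr rfl (fun A _ => hterm A), ← Finset.sum_div, ← Nat.cast_sum]
      have hconv : ∑ A : {A : Finset ℕ // A ∈ Jset}, a i A.1 * (k - A.1.card)
          = ∑ A ∈ Jset, a i A * (k - A.card) :=
        (Finset.sum_subtype Jset (fun _ => Iff.rfl) (fun A => a i A * (k - A.card))).symm
      rw [hconv, hS1 i, Nat.cast_mul, mul_div_assoc, div_self hnm0.ne', mul_one]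
    have hc : ∀ A : {A : Finset ℕ // A ∈ Jset}, ∑ i, q i A
        = ((if A.1.card < k then (n - m - 1).choose (k - A.1.card - 1) else 0 : ℕ) : ℚ) := by
      intro A
      have hconv : ∑ i, q i A
          = ((∑ i, a i A.1 : ℕ) : ℚ) * ((k - A.1.card : ℕ) : ℚ) / ((n - m : ℕ) : ℚ) := by
        rw [Nat.cast_sum, Finset.sum_mul, Finset.sum_div]
      rw [hconv, hC1 A.1 A.2]
      rcases lt_trichotomy A.1.card k with h | h | h
      · rw [if_pos h.le, if_pos h]
        have e1 : n - m - 1 + 1 = n - m := by omega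
        have e2 : k - A.1.card - 1 + 1 = k - A.1.card := by omega
        have hid := Nat.add_one_mul_choose_eq (n - m - 1) (k - A.1.card - 1)
        simp only [Nat.succ_eq_add_one, e1, e2] at hid
        rw [div_eq_iff hnm0.ne']
        have : ((n - m : ℕ) : ℚ) * ((n - m - 1).choose (k - A.1.card - 1) : ℚ)
            = ((n - m).choose (k - A.1.card) : ℚ) * ((k - A.1.card : ℕ) : ℚ) := by
          exact_mod_cast congrArg (Nat.cast : ℕ → ℚ) hid
        rw [← this]
        ring
      · have h0 : k - A.1.card = 0 := by omega
        rw [if_pos (le_of_eq h), if_neg (by omega : ¬ A.1.card < k), h0]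
        simp
      · rw [if_neg (by omega), if_neg (by omega)]
        simp
    obtain ⟨x, hxcap, hxrow, hxcol⟩ := trans_integral (fun i A => a i A.1) (fun _ => β)
      (fun A => if A.1.card < k then (n - m - 1).choose (k - A.1.card - 1) else 0) q
      hq0 hqc hr hc
    set x' : Fin S → Finset ℕ → ℕ :=
      fun i A => if h : A ∈ Jset then x i ⟨A, h⟩ else 0 with hx'def
    have hx'le : ∀ i A, x' i A ≤ a i A := by
      intro i A
      rw [hx'def]
      by_cases h : A ∈ Jset
      · simp only [dif_pos h]
        exact hxcap i ⟨A, h⟩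
      · simp [dif_neg h]
    have hx'row : ∀ i, ∑ A ∈ Jset, x' i A = β := by
      intro i
      have hconv : ∑ A ∈ Jset, x' i A = ∑ A : {A : Finset ℕ // A ∈ Jset}, x i A := by
        rw [Finset.sum_subtype Jset (fun _ => Iff.rfl) (fun A => x' i A)]
        refine Finset.sum_congr rfl fun A _ => ?_
        rw [hx'def]
        simp [A.2]
      rw [hconv]
      exact hxrow i
    have hx'col : ∀ A (hA : A ∈ Jset), ∑ i, x' i A
        = if A.card < k then (n - m - 1).choose (k - A.card - 1) else 0 := by
      intro A hA
      have h1 := hxcol ⟨A, hA⟩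
      have hconv : ∑ i, x' i A = ∑ i, x i ⟨A, hA⟩ := by
        refine Finset.sum_congr rfl fun i _ => ?_
        rw [hx'def]
        simp [hA]
      rw [hconv, h1]
    have hmnotin : m ∉ Finset.range m := by simp
    have hrangesucc : Finset.range (m+1) = insert m (Finset.range m) := Finset.range_add_one
    refine ⟨fun i B => if m ∈ B then x' i (B.erase m) else a i B - x' i B, ?_, ?_, ?_⟩
    · -- C1
      intro B hB
      have hBsub : B ⊆ Finset.range (m+1) := Finset.mem_powerset.1 hB
      have e1 : n - (m+1) = n - m - 1 := by omega
      by_cases hmB : m ∈ B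
      · have hA : B.erase m ∈ Jset := by
          rw [hJset, Finset.mem_powerset]
          intro v hv
          have h1 := hBsub (Finset.mem_of_mem_erase hv)
          have h2 := Finset.ne_of_mem_erase hv
          rw [Finset.mem_range] at h1 ⊢
          omega
        have hsum : ∑ i, (if m ∈ B then x' i (B.erase m) else a i B - x' i B)
            = ∑ i, x' i (B.erase m) := by simp [hmB]
        rw [hsum, hx'col _ hA]
        have hpos : 0 < B.card := Finset.card_pos.2 ⟨m, hmB⟩
        have hcard : B.card = (B.erase m).card + 1 := by
          rw [Finset.card_erase_of_mem hmB]
          omega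
        rw [e1]
        by_cases h : (B.erase m).card < k
        · rw [if_pos h, if_pos (by omega : B.card ≤ k),
            (by omega : k - B.card = k - (B.erase m).card - 1)]
        · rw [if_neg h, if_neg (by omega : ¬ B.card ≤ k)]
      · have hBJ : B ∈ Jset := by
          rw [hJset, Finset.mem_powerset]
          intro v hv
          have h1 := hBsub hv
          rw [Finset.mem_range] at h1 ⊢
          have : v ≠ m := fun h => hmB (h ▸ hv)
          omega
        have hsum : ∑ i, (if m ∈ B then x' i (B.erase m) else a i B - x' i B)
            = ∑ i, (a i B - x' i B) := by simp [hmB]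
        rw [hsum]
        have hsplit : ∑ i, (a i B - x' i B) + ∑ i, x' i B = ∑ i, a i B := by
          rw [← Finset.sum_add_distrib]
          exact Finset.sum_congr rfl fun i _ => Nat.sub_add_cancel (hx'le i B)
        have h1 := hC1 B hBJ
        have h2 := hx'col B hBJ
        rw [e1]
        rcases lt_trichotomy B.card k with h | h | h
        · have hpas := Nat.choose_succ_succ' (n - m - 1) (k - B.card - 1)
          rw [(by omega : n - m - 1 + 1 = n - m),
            (by omega : k - B.card - 1 + 1 = k - B.card)] at hpas
          rw [if_pos h.le] at h1
          rw [if_pos h] at h2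
          rw [if_pos h.le]
          omega
        · rw [if_pos h.le, (by omega : k - B.card = 0), Nat.choose_zero_right] at h1
          rw [if_neg (by omega : ¬ B.card < k)] at h2
          rw [if_pos h.le, (by omega : k - B.card = 0), Nat.choose_zero_right]
          omega
        · rw [if_neg (by omega : ¬ B.card ≤ k)] at h1
          rw [if_neg (by omega : ¬ B.card < k)] at h2
          rw [if_neg (by omega : ¬ B.card ≤ k)]
          omega
    · -- C2
      intro i v hv
      rw [Finset.sum_filter, hrangesucc, Finset.sum_powerset_insert hmnotin]
      by_cases hvm : v = m
      · subst hvm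
        have hfirst : ∑ A ∈ Jset, (if v ∈ A then
            (if v ∈ A then x' i (A.erase v) else a i A - x' i A) else 0) = 0 := by
          refine Finset.sum_eq_zero fun A hA => ?_
          have : v ∉ A := fun hvA =>
            hmnotin (Finset.mem_powerset.1 hA hvA)
          simp [this]
        have hsecond : ∀ A ∈ Jset, (if v ∈ insert v A then
            (if v ∈ insert v A then x' i ((insert v A).erase v)
              else a i (insert v A) - x' i (insert v A)) else 0) = x' i A := by
          intro A hA
          have hnotin : v ∉ A := fun hvA => hmnotin (Finset.mem_powerset.1 hA hvA)
          rw [if_pos (Finset.mem_insert_self v A), if_pos (Finset.mem_insert_self v A),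
            Finset.erase_insert hnotin]
        rw [hfirst, Finset.sum_congr rfl hsecond, zero_add]
        exact hx'row i
      · have hvm' : v < m := by omega
        have hfirst : ∀ A ∈ Jset, (if v ∈ A then
            (if m ∈ A then x' i (A.erase m) else a i A - x' i A) else 0)
            = (if v ∈ A then a i A - x' i A else 0) := by
          intro A hA
          have : m ∉ A := fun hmA => hmnotin (Finset.mem_powerset.1 hA hmA)
          simp [this]
        have hsecond : ∀ A ∈ Jset, (if v ∈ insert m A then
            (if m ∈ insert m A then x' i ((insert m A).erase m)
              else a i (insert m A) - x' i (insert m A)) else 0)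
            = (if v ∈ A then x' i A else 0) := by
          intro A hA
          have hnotin : m ∉ A := fun hmA => hmnotin (Finset.mem_powerset.1 hA hmA)
          rw [if_pos (Finset.mem_insert_self m A), Finset.erase_insert hnotin]
          by_cases hvA : v ∈ A
          · rw [if_pos (Finset.mem_insert_of_mem hvA), if_pos hvA]
          · rw [if_neg (by simp [hvm, hvA]), if_neg hvA]
        rw [Finset.sum_congr rfl hfirst, Finset.sum_congr rfl hsecond,
          ← Finset.sum_add_distrib]
        have hcomb : ∀ A ∈ Jset, ((if v ∈ A then a i A - x' i A else 0)
            + (if v ∈ A then x' i A else 0)) = (if v ∈ A then a i A else 0) := by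
          intro A hA
          by_cases hvA : v ∈ A
          · rw [if_pos hvA, if_pos hvA, if_pos hvA, Nat.sub_add_cancel (hx'le i A)]
          · simp [hvA]
        rw [Finset.sum_congr rfl hcomb, ← Finset.sum_filter]
        exact hC2 i v hvm'
    · -- C3
      intro i
      rw [hrangesucc, Finset.sum_powerset_insert hmnotin]
      have hfirst : ∀ A ∈ Jset, (if m ∈ A then x' i (A.erase m) else a i A - x' i A)
          = a i A - x' i A := by
        intro A hA
        have : m ∉ A := fun hmA => hmnotin (Finset.mem_powerset.1 hA hmA)
        simp [this]
      have hsecond : ∀ A ∈ Jset, (if m ∈ insert m A then x' i ((insert m A).erase m)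
          else a i (insert m A) - x' i (insert m A)) = x' i A := by
        intro A hA
        have hnotin : m ∉ A := fun hmA => hmnotin (Finset.mem_powerset.1 hA hmA)
        rw [if_pos (Finset.mem_insert_self m A), Finset.erase_insert hnotin]
      rw [Finset.sum_congr rfl hfirst, Finset.sum_congr rfl hsecond,
        ← Finset.sum_add_distrib]
      have hcomb : ∀ A ∈ Jset, (a i A - x' i A + x' i A) = a i A :=
        fun A _ => Nat.sub_add_cancel (hx'le i A)
      rw [Finset.sum_congr rfl hcomb]
      exact hC3 i

lemma Bdvd (n k : ℕ) (hk1 : 1 ≤ k) (hkn : k ≤ n) :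
    (n / Nat.gcd n k) ∣ n.choose k := by
  set g := Nat.gcd n k with hg
  have hg0 : 0 < g := Nat.gcd_pos_of_pos_right _ (by omega)
  have hdn : g ∣ n := Nat.gcd_dvd_left n k
  have hdk : g ∣ k := Nat.gcd_dvd_right n k
  have hcop : Nat.Coprime (n / g) (k / g) := Nat.coprime_div_gcd_div_gcd hg0
  have hid : n * (n-1).choose (k-1) = n.choose k * k := by
    have h := Nat.add_one_mul_choose_eq (n-1) (k-1)
    rw [(by omega : n - 1 + 1 = n),
      (by omega : k - 1 + 1 = k)] at h
    exact h
  have h2 : (n / g) * ((n-1).choose (k-1)) = n.choose k * (k / g) := by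
    apply Nat.eq_of_mul_eq_mul_left hg0
    calc g * ((n / g) * ((n-1).choose (k-1)))
        = (g * (n / g)) * ((n-1).choose (k-1)) := by ring
      _ = n * ((n-1).choose (k-1)) := by rw [Nat.mul_div_cancel' hdn]
      _ = n.choose k * k := hid
      _ = n.choose k * (g * (k / g)) := by rw [Nat.mul_div_cancel' hdk]
      _ = g * (n.choose k * (k / g)) := by ring
  have h3 : (n / g) ∣ n.choose k * (k / g) := ⟨(n-1).choose (k-1), h2.symm⟩
  exact Nat.Coprime.dvd_of_dvd_mul_right hcop h3

-- the ℕ-version of the theorem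
lemma nat_version (n k : ℕ) (hk1 : 1 ≤ k) (hkn : k ≤ n) :
    ∃ Q : Fin (n.choose k / (n / Nat.gcd n k)) → Finset (Finset ℕ),
      (∀ i j, i ≠ j → Disjoint (Q i) (Q j)) ∧
      Finset.univ.biUnion Q = Finset.powersetCard k (Finset.range n) ∧
      (∀ i, ∀ v < n, ((Q i).filter (fun T => v ∈ T)).card = k / Nat.gcd n k) ∧
      (∀ i, (Q i).card = n / Nat.gcd n k) := by
  set g := Nat.gcd n k with hg
  set β := k / g with hβ
  set B := n / g with hB
  set S := n.choose k / B with hS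
  have hg0 : 0 < g := Nat.gcd_pos_of_pos_right _ (by omega)
  have hkg : k = g * β := (Nat.mul_div_cancel' (Nat.gcd_dvd_right n k)).symm
  have hng : n = g * B := (Nat.mul_div_cancel' (Nat.gcd_dvd_left n k)).symm
  have hSB : S * B = n.choose k := Nat.div_mul_cancel (Bdvd n k hk1 hkn)
  obtain ⟨a, hC1, hC2, hC3⟩ := stage n k g β B S hkg hng hk1 hkn hSB n le_rfl
  set ps := (Finset.range n).powerset with hps
  have key1 : ∀ A ∈ ps, ∑ i, a i A = if A.card = k then 1 else 0 := by
    intro A hA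
    have h := hC1 A hA
    rw [Nat.sub_self] at h
    rcases lt_trichotomy A.card k with hlt | heq | hgt
    · rw [if_pos hlt.le, (by omega : k - A.card = (k - A.card - 1) + 1),
        Nat.choose_zero_succ] at h
      rw [h, if_neg (by omega)]
    · rw [if_pos heq.le, (by omega : k - A.card = 0), Nat.choose_zero_right] at h
      rw [h, if_pos heq]
    · rw [if_neg (by omega)] at h
      rw [h, if_neg (by omega)]
  have hble : ∀ i A, A ∈ ps → a i A ≤ 1 := by
    intro i A hA
    have hle : a i A ≤ ∑ i', a i' A := by
      exact Finset.single_le_sum (f := fun i' => a i' A)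
        (fun i' _ => Nat.zero_le _) (Finset.mem_univ i)
    have := key1 A hA
    by_cases h : A.card = k
    · rw [if_pos h] at this; omega
    · rw [if_neg h] at this; omega
  refine ⟨fun i => ps.filter (fun A => a i A ≠ 0), ?_, ?_, ?_, ?_⟩
  · -- disjoint
    intro i j hij
    rw [Finset.disjoint_left]
    intro A hAi hAj
    rw [Finset.mem_filter] at hAi hAj
    obtain ⟨hA, hai⟩ := hAi
    obtain ⟨_, haj⟩ := hAj
    have hsum := key1 A hA
    have h1 : a i A + a j A ≤ ∑ i', a i' A := by
      have : ({i, j} : Finset (Fin S)) ⊆ Finset.univ := Finset.subset_univ _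
      calc a i A + a j A = ∑ i' ∈ ({i, j} : Finset (Fin S)), a i' A := by
            rw [Finset.sum_pair hij]
        _ ≤ ∑ i', a i' A := Finset.sum_le_sum_of_subset this
    by_cases h : A.card = k
    · rw [if_pos h] at hsum; omega
    · rw [if_neg h] at hsum; omega
  · -- union
    ext A
    rw [Finset.mem_biUnion, Finset.mem_powersetCard]
    constructor
    · rintro ⟨i, _, hA⟩
      rw [Finset.mem_filter] at hA
      obtain ⟨hA, hai⟩ := hA
      have hsum := key1 A hA
      refine ⟨Finset.mem_powerset.1 hA, ?_⟩
      by_contra h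
      rw [if_neg h] at hsum
      have hle : a i A ≤ ∑ i', a i' A := by
        exact Finset.single_le_sum (f := fun i' => a i' A)
          (fun i' _ => Nat.zero_le _) (Finset.mem_univ i)
      omega
    · rintro ⟨hsub, hcard⟩
      have hA : A ∈ ps := Finset.mem_powerset.2 hsub
      have hsum := key1 A hA
      rw [if_pos hcard] at hsum
      have : ∃ i, a i A ≠ 0 := by
        by_contra h
        push_neg at h
        rw [Finset.sum_eq_zero (fun i _ => h i)] at hsum
        omega
      obtain ⟨i, hi⟩ := this
      exact ⟨i, Finset.mem_univ i, Finset.mem_filter.2 ⟨hA, hi⟩⟩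
  · -- regularity
    intro i v hv
    have hcount : ((ps.filter (fun A => a i A ≠ 0)).filter (fun T => v ∈ T)).card
        = ∑ A ∈ ps.filter (fun A => v ∈ A), a i A := by
      rw [Finset.filter_filter, Finset.card_filter, Finset.sum_filter]
      refine Finset.sum_congr rfl fun A hA => ?_
      have hb := hble i A hA
      by_cases h1 : a i A = 0
      · simp [h1]
      · have h2 : a i A = 1 := by omega
        by_cases h3 : v ∈ A <;> simp [h1, h2, h3]
    rw [hcount]
    exact hC2 i v hv
  · -- size
    intro i
    have hcount : (ps.filter (fun A => a i A ≠ 0)).card = ∑ A ∈ ps, a i A := by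
      rw [Finset.card_filter]
      refine Finset.sum_congr rfl fun A hA => ?_
      have hb := hble i A hA
      by_cases h1 : a i A = 0
      · simp [h1]
      · have h2 : a i A = 1 := by omega
        simp [h1, h2]
    rw [hcount]
    exact hC3 i

/-- Baranyai-type base-scheduling partition: the family of all `(t+1)`-subsets
of an `Ω`-element set `K` can be partitioned into `Ŝ` pairwise disjoint
subfamilies, each `β̂`-regular over `K` (hence each of size `B̂`), where
`g = gcd(Ω, t+1)`, `β̂ = (t+1)/g`, `B̂ = Ω/g`, `Ŝ = C(Ω, t+1)/B̂`. -/
theorem base_scheduling_partition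
    {K : Type*} [Fintype K] [DecidableEq K]
    (Ω t : ℕ) (hK : Fintype.card K = Ω) (h1 : 1 ≤ t + 1) (h2 : t + 1 ≤ Ω) :
    ∃ P : Fin (Nat.choose Ω (t + 1) / (Ω / Nat.gcd Ω (t + 1))) →
          Finset (Finset K),
      (∀ i j, i ≠ j → Disjoint (P i) (P j)) ∧
      Finset.univ.biUnion P
        = Finset.powersetCard (t + 1) (Finset.univ : Finset K) ∧
      (∀ i, ∀ k : K,
        ((P i).filter (fun T => k ∈ T)).card
          = (t + 1) / Nat.gcd Ω (t + 1)) ∧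
      (∀ i, (P i).card = Ω / Nat.gcd Ω (t + 1)) := by
  obtain ⟨Q, hdisj, hunion, hreg, hsize⟩ := nat_version Ω (t+1) h1 h2
  set e : K ≃ Fin Ω := Fintype.equivFinOfCardEq hK with he
  set ι : K → ℕ := fun x => (e x : ℕ) with hι_def
  have hι : Function.Injective ι := fun x y h => e.injective (Fin.val_injective h)
  have himg : Finset.univ.image ι = Finset.range Ω := by
    ext y
    simp only [Finset.mem_image, Finset.mem_range, Finset.mem_univ, true_and]
    constructor
    · rintro ⟨x, rfl⟩
      exact (e x).isLt
    · intro hy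
      exact ⟨e.symm ⟨y, hy⟩, by simp [hι_def]⟩
  set pb : Finset ℕ → Finset K := fun A => Finset.univ.filter (fun kk => ι kk ∈ A)
    with hpb_def
  have hpb_mem : ∀ A kk, kk ∈ pb A ↔ ι kk ∈ A := by
    intro A kk
    simp [hpb_def]
  have hpb_img : ∀ A, A ⊆ Finset.range Ω → (pb A).image ι = A := by
    intro A hsub
    ext y
    simp only [Finset.mem_image]
    constructor
    · rintro ⟨kk, hkk, rfl⟩
      exact (hpb_mem A kk).1 hkk
    · intro hy
      have hyr : y ∈ Finset.univ.image ι := himg ▸ hsub hy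
      obtain ⟨kk, _, rfl⟩ := Finset.mem_image.1 hyr
      exact ⟨kk, (hpb_mem A kk).2 hy, rfl⟩
  have hpb_card : ∀ A, A ⊆ Finset.range Ω → (pb A).card = A.card := by
    intro A hsub
    calc (pb A).card = ((pb A).image ι).card :=
          (Finset.card_image_of_injective _ hι).symm
      _ = A.card := by rw [hpb_img A hsub]
  have hpb_inj : ∀ A1 A2, A1 ⊆ Finset.range Ω → A2 ⊆ Finset.range Ω →
      pb A1 = pb A2 → A1 = A2 := by
    intro A1 A2 h1' h2' h
    rw [← hpb_img A1 h1', ← hpb_img A2 h2', h]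
  have hQsub : ∀ i, ∀ A ∈ Q i, A ⊆ Finset.range Ω ∧ A.card = t + 1 := by
    intro i A hA
    have : A ∈ Finset.univ.biUnion Q := Finset.mem_biUnion.2 ⟨i, Finset.mem_univ i, hA⟩
    rw [hunion, Finset.mem_powersetCard] at this
    exact this
  refine ⟨fun i => (Q i).image pb, ?_, ?_, ?_, ?_⟩
  · intro i j hij
    rw [Finset.disjoint_left]
    rintro T hTi hTj
    obtain ⟨A1, hA1, rfl⟩ := Finset.mem_image.1 hTi
    obtain ⟨A2, hA2, hT⟩ := Finset.mem_image.1 hTj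
    have : A2 = A1 := hpb_inj A2 A1 (hQsub j A2 hA2).1 (hQsub i A1 hA1).1 hT
    subst this
    exact Finset.disjoint_left.1 (hdisj i j hij) hA1 hA2
  · ext T
    rw [Finset.mem_biUnion, Finset.mem_powersetCard]
    constructor
    · rintro ⟨i, _, hT⟩
      obtain ⟨A, hA, rfl⟩ := Finset.mem_image.1 hT
      obtain ⟨hsub, hcard⟩ := hQsub i A hA
      exact ⟨Finset.subset_univ _, by rw [hpb_card A hsub, hcard]⟩
    · rintro ⟨_, hcard⟩
      set A := T.image ι with hA_def
      have hsub : A ⊆ Finset.range Ω := by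
        rw [← himg]
        exact Finset.image_subset_image (Finset.subset_univ T)
      have hAcard : A.card = t + 1 := by
        rw [hA_def, Finset.card_image_of_injective _ hι, hcard]
      have hAmem : A ∈ Finset.univ.biUnion Q := by
        rw [hunion, Finset.mem_powersetCard]
        exact ⟨hsub, hAcard⟩
      obtain ⟨i, _, hAQ⟩ := Finset.mem_biUnion.1 hAmem
      refine ⟨i, Finset.mem_univ i, Finset.mem_image.2 ⟨A, hAQ, ?_⟩⟩
      ext kk
      rw [hpb_mem A kk]
      constructor
      · intro h
        obtain ⟨x, hx, hxe⟩ := Finset.mem_image.1 h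
        exact hι hxe ▸ hx
      · intro h
        exact Finset.mem_image_of_mem ι h
  · intro i kk
    have hfilter : ((Q i).image pb).filter (fun T => kk ∈ T)
        = ((Q i).filter (fun A => ι kk ∈ A)).image pb := by
      ext T
      simp only [Finset.mem_filter, Finset.mem_image]
      constructor
      · rintro ⟨⟨A, hA, rfl⟩, hkk⟩
        exact ⟨A, ⟨hA, (hpb_mem A kk).1 hkk⟩, rfl⟩
      · rintro ⟨A, ⟨hA, hik⟩, rfl⟩
        exact ⟨⟨A, hA, rfl⟩, (hpb_mem A kk).2 hik⟩
    rw [hfilter, Finset.card_image_of_injOn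
      (fun A1 h1' A2 h2' h =>
        hpb_inj A1 A2 (hQsub i A1 (Finset.mem_filter.1 h1').1).1
          (hQsub i A2 (Finset.mem_filter.1 h2').1).1 h)]
    exact hreg i (ι kk) (e kk).isLt
  · intro i
    rw [Finset.card_image_of_injOn
      (fun A1 h1' A2 h2' h =>
        hpb_inj A1 A2 (hQsub i A1 h1').1 (hQsub i A2 h2').1 h)]
    exact hsize i
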